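/- Almost every α ∈ ℝⁿ (with respect to Lebesgue measure) satisfies μ_{n,ℓ}(α) = n, for each pair of integers 1 ≤ ℓ ≤ n. -/

import Mathlib

open Finset MeasureTheory
open scoped ENNReal

/-- Distance to the nearest integer. -/
noncomputable def dnint (r : ℝ) : ℝ := |r - round r|

/-- Height of an integer vector: maximum of absolute values of coordinates. -/
def Hgt {n : ℕ} (x : Fin n → ℤ) : ℕ := Finset.univ.sup fun i => (x i).natAbs

/-- The cone condition: the height is attained among the first `ℓ` coordinates. -/
def cone {n : ℕ} (ℓ : ℕ) (x : Fin n → ℤ) : Prop :=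
  ((Finset.univ.filter fun i : Fin n => ℓ ≤ (i : ℕ)).sup fun i => (x i).natAbs) <
  ((Finset.univ.filter fun i : Fin n => (i : ℕ) < ℓ).sup fun i => (x i).natAbs)

/-- The restricted Diophantine exponent `μ_{n,ℓ}(α)`. -/
noncomputable def mu (n ℓ : ℕ) (α : Fin n → ℝ) : ℝ :=
  sSup {m : ℝ | 0 ≤ m ∧ {x : Fin n → ℤ | cone ℓ x ∧
    0 < dnint (∑ i, (x i : ℝ) * α i) ∧
    dnint (∑ i, (x i : ℝ) * α i) ≤ (Hgt x : ℝ) ^ (-m)}.Infinite}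

lemma dnint_nonneg (r : ℝ) : 0 ≤ dnint r := abs_nonneg _

lemma dnint_le (r : ℝ) (k : ℤ) : dnint r ≤ |r - k| := by
  have hround : round r = round (r - k) + k := by
    rw [← round_add_intCast (r - (k:ℝ)) k]; ring_nf
  unfold dnint
  rw [hround]
  push_cast
  have he : r - (↑(round (r - (k:ℝ))) + (k:ℝ)) = (r - k) - round (r - (k:ℝ)) := by ring
  rw [he]
  set d : ℝ := r - k
  rcases lt_or_ge |d| (1/2) with h | h
  · have h0 : round d = 0 := by
      rw [round_eq_zero_iff]
      constructor
      · nlinarith [abs_lt.1 h]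
      · nlinarith [abs_lt.1 h]
    simp [h0]
  · calc |d - round d| ≤ 1/2 := abs_sub_round d
      _ ≤ |d| := h

lemma dnint_add_int (r : ℝ) (k : ℤ) : dnint (r + k) = dnint r := by
  unfold dnint; rw [round_add_intCast]; push_cast; ring_nf

lemma dnint_neg (r : ℝ) : dnint (-r) = dnint r := by
  have h1 : ∀ s : ℝ, dnint (-s) ≤ dnint s := by
    intro s
    have h := dnint_le (-s) (-round s)
    have he : |(-s : ℝ) - ((-round s : ℤ) : ℝ)| = |s - (round s : ℝ)| := by
      push_cast; rw [← abs_neg]; ring_nf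
    rw [he] at h
    exact h
  refine le_antisymm (h1 r) ?_
  have := h1 (-r); rwa [neg_neg] at this

lemma dnint_pos_of_not_int (r : ℝ) (h : ∀ k : ℤ, r ≠ k) : 0 < dnint r := by
  rcases (dnint_nonneg r).lt_or_eq with h' | h'
  · exact h'
  · exfalso
    have h2 : r = round r := by
      have h3 := abs_eq_zero.1 h'.symm
      linarith
    exact h (round r) h2

lemma dirichlet {n : ℕ} (hn : 1 ≤ n) (α : Fin n → ℝ) (b : Fin n → ℕ) (hb : ∀ i, 1 ≤ b i) :
    ∃ x : Fin n → ℤ, x ≠ 0 ∧ (∀ i, (x i).natAbs ≤ b i) ∧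
      dnint (∑ i, (x i : ℝ) * α i) ≤ (((∏ i, b i : ℕ) : ℝ))⁻¹ := by
  classical
  set N : ℕ := ∏ i, b i with hN
  have hN1 : 1 ≤ N := Nat.one_le_iff_ne_zero.2 (by
    rw [hN]; exact Finset.prod_ne_zero_iff.2 fun i _ => Nat.one_le_iff_ne_zero.1 (hb i))
  have hNR : (0:ℝ) < N := by exact_mod_cast hN1
  set D : Finset (Fin n → ℤ) := Fintype.piFinset fun i => Finset.Icc (0:ℤ) (b i) with hD
  have hDcard : D.card = ∏ i, (b i + 1) := by
    rw [hD, Fintype.card_piFinset]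
    congr 1; funext i
    rw [Int.card_Icc]
    simp
  set F : (Fin n → ℤ) → ℤ := fun y => ⌊(N:ℝ) * Int.fract (∑ i, (y i : ℝ) * α i)⌋ with hF
  have hmaps : ∀ y ∈ D, F y ∈ Finset.Ico (0:ℤ) N := by
    intro y _
    have h0 : (0:ℝ) ≤ Int.fract (∑ i, (y i : ℝ) * α i) := Int.fract_nonneg _
    have h1 : Int.fract (∑ i, (y i : ℝ) * α i) < 1 := Int.fract_lt_one _
    rw [Finset.mem_Ico]
    constructor
    · exact Int.floor_nonneg.2 (by positivity)
    · rw [Int.floor_lt]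
      push_cast
      nlinarith
  have hcard : (Finset.Ico (0:ℤ) (N:ℤ)).card < D.card := by
    rw [hDcard, Int.card_Ico]
    simp only [sub_zero, Int.toNat_natCast]
    calc N = ∏ i, b i := hN
      _ < ∏ i, (b i + 1) := by
          apply Finset.prod_lt_prod_of_nonempty
          · intro i _; exact_mod_cast hb i
          · intro i _; omega
          · exact Finset.univ_nonempty_iff.2 (Fin.pos_iff_nonempty.1 hn)
  obtain ⟨y, hy, y', hy', hne, heq⟩ := Finset.exists_ne_map_eq_of_card_lt_of_maps_to hcard hmaps
  refine ⟨y - y', ?_, ?_, ?_⟩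
  · intro h
    exact hne (by funext i; have := congrFun h i; simpa [sub_eq_zero] using this)
  · intro i
    have h1 := (Fintype.mem_piFinset.1 hy) i
    have h2 := (Fintype.mem_piFinset.1 hy') i
    rw [Finset.mem_Icc] at h1 h2
    simp only [Pi.sub_apply]
    omega
  · set s : ℝ := ∑ i, (y i : ℝ) * α i with hs
    set s' : ℝ := ∑ i, (y' i : ℝ) * α i with hs'
    have hsum : ∑ i, (((y - y') i : ℤ) : ℝ) * α i = s - s' := by
      rw [hs, hs', ← Finset.sum_sub_distrib]
      congr 1; funext i
      simp only [Pi.sub_apply]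
      push_cast
      ring
    rw [hsum]
    have hdec : s - s' = (Int.fract s - Int.fract s') + ((⌊s⌋ - ⌊s'⌋ : ℤ) : ℝ) := by
      rw [Int.fract, Int.fract]; push_cast; ring
    rw [hdec, dnint_add_int]
    have hb1 : (F y : ℝ) ≤ (N:ℝ) * Int.fract s := Int.floor_le _
    have hb2 : (N:ℝ) * Int.fract s < F y + 1 := Int.lt_floor_add_one _
    have hb3 : (F y : ℝ) ≤ (N:ℝ) * Int.fract s' := by rw [heq]; exact Int.floor_le _
    have hb4 : (N:ℝ) * Int.fract s' < F y + 1 := by rw [heq]; exact Int.lt_floor_add_one _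
    have habs : |Int.fract s - Int.fract s'| ≤ (N:ℝ)⁻¹ := by
      rw [abs_le]
      have hN' : (0:ℝ) < (N:ℝ) := hNR
      constructor
      · rw [neg_le, neg_sub]
        rw [sub_le_iff_le_add]
        rw [← mul_le_mul_iff_right₀ hN']
        rw [mul_add, mul_inv_cancel₀ (ne_of_gt hN')]
        linarith
      · rw [sub_le_iff_le_add]
        rw [← mul_le_mul_iff_right₀ hN']
        rw [mul_add, mul_inv_cancel₀ (ne_of_gt hN')]
        linarith
    calc dnint (Int.fract s - Int.fract s') ≤ |Int.fract s - Int.fract s' - ((0:ℤ):ℝ)| :=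
          dnint_le _ 0
      _ = |Int.fract s - Int.fract s'| := by norm_num
      _ ≤ (N:ℝ)⁻¹ := habs

lemma oneD_pos (a : ℤ) (ha : 0 < a) (c δ : ℝ) (hδ : 0 ≤ δ) :
    volume {t : ℝ | t ∈ Set.Icc (0:ℝ) 1 ∧ dnint (c + a * t) ≤ δ} ≤ ENNReal.ofReal (6 * δ) := by
  rcases lt_or_ge (1/2 : ℝ) δ with hbig | hsmall
  · calc volume {t : ℝ | t ∈ Set.Icc (0:ℝ) 1 ∧ dnint (c + a * t) ≤ δ}
        ≤ volume (Set.Icc (0:ℝ) 1) := measure_mono fun t ht => ht.1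
      _ = ENNReal.ofReal 1 := by rw [Real.volume_Icc]; norm_num
      _ ≤ ENNReal.ofReal (6 * δ) := ENNReal.ofReal_le_ofReal (by linarith)
  · have haR : (0:ℝ) < (a:ℝ) := by exact_mod_cast ha
    have ha1 : (1:ℝ) ≤ (a:ℝ) := by exact_mod_cast ha
    set I : Finset ℤ := Finset.Icc ⌈c - δ⌉ ⌊c + a + δ⌋ with hI
    have hsub : {t : ℝ | t ∈ Set.Icc (0:ℝ) 1 ∧ dnint (c + a * t) ≤ δ} ⊆
        ⋃ k ∈ I, Set.Icc (((k:ℝ) - δ - c)/a) (((k:ℝ) + δ - c)/a) := by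
      intro t ⟨⟨ht0, ht1⟩, hd⟩
      set r : ℝ := c + a * t with hr
      set k : ℤ := round r with hk
      have habs : |r - k| ≤ δ := hd
      rw [abs_le] at habs
      have hat0 : (0:ℝ) ≤ a * t := by positivity
      have hat1 : (a:ℝ) * t ≤ a := by nlinarith
      have hkI : k ∈ I := by
        rw [hI, Finset.mem_Icc]
        constructor
        · rw [Int.ceil_le]; push_cast; linarith
        · rw [Int.le_floor]; push_cast; linarith
      refine Set.mem_biUnion hkI ?_
      rw [Set.mem_Icc]
      constructor
      · rw [div_le_iff₀ haR]; linarith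
      · rw [le_div_iff₀ haR]; linarith
    calc volume {t : ℝ | t ∈ Set.Icc (0:ℝ) 1 ∧ dnint (c + a * t) ≤ δ}
        ≤ volume (⋃ k ∈ I, Set.Icc (((k:ℝ) - δ - c)/a) (((k:ℝ) + δ - c)/a)) := measure_mono hsub
      _ ≤ ∑ k ∈ I, volume (Set.Icc (((k:ℝ) - δ - c)/a) (((k:ℝ) + δ - c)/a)) :=
          measure_biUnion_finset_le I _
      _ = ∑ k ∈ I, ENNReal.ofReal (2 * δ / a) := by
          apply Finset.sum_congr rfl
          intro k _
          rw [Real.volume_Icc]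
          congr 1
          field_simp
          ring
      _ = I.card * ENNReal.ofReal (2 * δ / a) := by rw [Finset.sum_const, nsmul_eq_mul]
      _ ≤ ((a.toNat + 2 : ℕ) : ℝ≥0∞) * ENNReal.ofReal (2 * δ / a) := by
          gcongr
          have hcard : I.card = (⌊c + a + δ⌋ + 1 - ⌈c - δ⌉).toNat := by
            rw [hI, Int.card_Icc]
          have hZ : ⌊c + a + δ⌋ + 1 - ⌈c - δ⌉ ≤ a + 2 := by
            have h1 := Int.floor_le (c + (a:ℝ) + δ)
            have h2 := Int.le_ceil (c - δ)
            have : ((⌊c + a + δ⌋ + 1 - ⌈c - δ⌉ : ℤ) : ℝ) ≤ ((a + 2 : ℤ) : ℝ) := by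
              push_cast
              linarith
            exact_mod_cast this
          have : I.card ≤ (a + 2 : ℤ).toNat := by
            rw [hcard]
            exact Int.toNat_le_toNat hZ
          have heq : (a + 2 : ℤ).toNat = a.toNat + 2 := by omega
          rw [heq] at this
          exact_mod_cast this
      _ ≤ ENNReal.ofReal (6 * δ) := by
          have h1 : ((a.toNat + 2 : ℕ) : ℝ≥0∞) = ENNReal.ofReal ((a.toNat + 2 : ℕ) : ℝ) := by
            rw [ENNReal.ofReal_natCast]
          rw [h1, ← ENNReal.ofReal_mul (by positivity)]
          apply ENNReal.ofReal_le_ofReal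
          have haN : ((a.toNat : ℝ)) = (a:ℝ) := by
            exact_mod_cast congrArg (Int.cast : ℤ → ℝ) (Int.toNat_of_nonneg ha.le)
          push_cast
          rw [haN]
          rw [div_eq_mul_inv]
          have h6 : ((a:ℝ) + 2) * (2 * δ) ≤ 6 * δ * a := by nlinarith
          calc ((a:ℝ) + 2) * (2 * δ * (a:ℝ)⁻¹) = (((a:ℝ) + 2) * (2 * δ)) * (a:ℝ)⁻¹ := by ring
            _ ≤ (6 * δ * a) * (a:ℝ)⁻¹ := by gcongr
            _ = 6 * δ := by field_simp

lemma oneD (a : ℤ) (ha : a ≠ 0) (c δ : ℝ) (hδ : 0 ≤ δ) :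
    volume {t : ℝ | t ∈ Set.Icc (0:ℝ) 1 ∧ dnint (c + a * t) ≤ δ} ≤ ENNReal.ofReal (6 * δ) := by
  rcases ha.lt_or_gt with hneg | hpos
  · have hset : {t : ℝ | t ∈ Set.Icc (0:ℝ) 1 ∧ dnint (c + a * t) ≤ δ} =
        {t : ℝ | t ∈ Set.Icc (0:ℝ) 1 ∧ dnint (-c + ((-a : ℤ) : ℝ) * t) ≤ δ} := by
      ext t
      have : dnint (c + a * t) = dnint (-c + ((-a : ℤ) : ℝ) * t) := by
        rw [← dnint_neg (c + a * t)]
        congr 1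
        push_cast
        ring
      simp [this]
    rw [hset]
    exact oneD_pos (-a) (by omega) (-c) δ hδ
  · exact oneD_pos a hpos c δ hδ

lemma measurable_dnint : Measurable dnint := by
  have h : (dnint : ℝ → ℝ) = fun r => |r - ((⌊r + 1/2⌋ : ℤ) : ℝ)| := by
    funext r
    rw [dnint, round_eq]
  rw [h]
  apply Measurable.abs
  apply Measurable.sub measurable_id
  exact (measurable_from_top.comp (Int.measurable_floor.comp (measurable_id.add_const _)) :
    Measurable fun r : ℝ => ((⌊r + 1/2⌋ : ℤ) : ℝ))

lemma vol_eval_unique {γ : Type} [Fintype γ] [Unique γ] (g : γ) (A : Set ℝ) :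
    (volume : Measure (γ → ℝ)) ((fun v => v g) ⁻¹' A) = volume A := by
  have h1 : ((fun v : γ → ℝ => v g) ⁻¹' A) = Set.univ.pi (fun _ : γ => A) := by
    ext v
    simp only [Set.mem_preimage, Set.mem_pi, Set.mem_univ, forall_true_left]
    constructor
    · intro h i; rwa [Subsingleton.elim i g]
    · intro h; exact h g
  rw [h1, volume_pi_pi]
  rw [Finset.prod_const]
  have : (Finset.univ : Finset γ).card = 1 := by
    simp [Finset.card_univ]
  rw [this, pow_one]

lemma slab {n : ℕ} (x : Fin n → ℤ) (j : Fin n) (hj : x j ≠ 0) (δ : ℝ) (hδ : 0 ≤ δ) :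
    volume {α : Fin n → ℝ | (∀ i, α i ∈ Set.Icc (0:ℝ) 1) ∧
      dnint (∑ i, (x i : ℝ) * α i) ≤ δ} ≤ ENNReal.ofReal (6 * δ) := by
  classical
  set p : Fin n → Prop := fun i => i ≠ j with hp
  set e := MeasurableEquiv.piEquivPiSubtypeProd (fun _ : Fin n => ℝ) p with he
  have hmp : MeasurePreserving e volume volume :=
    volume_preserving_piEquivPiSubtypeProd (fun _ : Fin n => ℝ) p
  set j₂ : {i : Fin n // ¬ p i} := ⟨j, by simp [hp]⟩ with hj₂
  set c : ({i : Fin n // p i} → ℝ) → ℝ := fun u => ∑ i, (x i.1 : ℝ) * u i with hc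
  have hcm : Measurable c := by
    apply Finset.measurable_sum
    intro i _
    exact (measurable_pi_apply i).const_mul _
  set T : Set (({i : Fin n // p i} → ℝ) × ({i : Fin n // ¬ p i} → ℝ)) :=
    {w | (∀ i, w.1 i ∈ Set.Icc (0:ℝ) 1) ∧ w.2 j₂ ∈ Set.Icc (0:ℝ) 1 ∧
      dnint (c w.1 + (x j : ℝ) * w.2 j₂) ≤ δ} with hT
  have hTm : MeasurableSet T := by
    have h1 : MeasurableSet {w : ({i : Fin n // p i} → ℝ) × ({i : Fin n // ¬ p i} → ℝ) |
        ∀ i, w.1 i ∈ Set.Icc (0:ℝ) 1} := by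
      have heq : {w : ({i : Fin n // p i} → ℝ) × ({i : Fin n // ¬ p i} → ℝ) |
          ∀ i, w.1 i ∈ Set.Icc (0:ℝ) 1} = ⋂ i, {w | w.1 i ∈ Set.Icc (0:ℝ) 1} := by
        ext w; simp
      rw [heq]
      exact MeasurableSet.iInter fun i =>
        ((measurable_pi_apply i).comp measurable_fst) measurableSet_Icc
    have h2 : MeasurableSet {w : ({i : Fin n // p i} → ℝ) × ({i : Fin n // ¬ p i} → ℝ) |
        w.2 j₂ ∈ Set.Icc (0:ℝ) 1} :=
      ((measurable_pi_apply j₂).comp measurable_snd) measurableSet_Icc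
    have h3 : MeasurableSet {w : ({i : Fin n // p i} → ℝ) × ({i : Fin n // ¬ p i} → ℝ) |
        dnint (c w.1 + (x j : ℝ) * w.2 j₂) ≤ δ} :=
      (measurable_dnint.comp ((hcm.comp measurable_fst).add
        (((measurable_pi_apply j₂).comp measurable_snd).const_mul _))) measurableSet_Iic
    rw [hT, Set.setOf_and, Set.setOf_and]
    exact h1.inter (h2.inter h3)
  have hsub : {α : Fin n → ℝ | (∀ i, α i ∈ Set.Icc (0:ℝ) 1) ∧
      dnint (∑ i, (x i : ℝ) * α i) ≤ δ} ⊆ e ⁻¹' T := by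
    intro α ⟨hbox, hdn⟩
    have hsum : ∑ i, (x i : ℝ) * α i = c (fun i : {i : Fin n // p i} => α i.1) + (x j : ℝ) * α j := by
      rw [hc]
      have h4 : (Finset.univ : Finset (Fin n)).sum (fun i => (x i : ℝ) * α i) =
          (x j : ℝ) * α j + ∑ i ∈ Finset.univ.erase j, (x i : ℝ) * α i :=
        (Finset.add_sum_erase Finset.univ (fun i => (x i : ℝ) * α i) (Finset.mem_univ j)).symm
      rw [h4]
      rw [Finset.sum_subtype (p := p) (Finset.univ.erase j)
        (fun i => by simp [hp, Finset.mem_erase]) (fun i => (x i : ℝ) * α i)]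
      ring
    have hea : e α = (fun i : {i : Fin n // p i} => α i.1,
        fun i : {i : Fin n // ¬ p i} => α i.1) := rfl
    show (∀ i, (e α).1 i ∈ Set.Icc (0:ℝ) 1) ∧ (e α).2 j₂ ∈ Set.Icc (0:ℝ) 1 ∧
      dnint (c (e α).1 + (x j : ℝ) * (e α).2 j₂) ≤ δ
    rw [hea]
    refine ⟨fun i => hbox i.1, hbox j, ?_⟩
    rw [← hsum]
    exact hdn
  calc volume {α : Fin n → ℝ | (∀ i, α i ∈ Set.Icc (0:ℝ) 1) ∧ dnint (∑ i, (x i : ℝ) * α i) ≤ δ}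
      ≤ volume (e ⁻¹' T) := measure_mono hsub
    _ = volume T := hmp.measure_preimage hTm.nullMeasurableSet
    _ ≤ ENNReal.ofReal (6 * δ) := by
        rw [MeasureTheory.Measure.volume_eq_prod, Measure.prod_apply hTm]
        have hslice : ∀ u : {i : Fin n // p i} → ℝ,
            volume (Prod.mk u ⁻¹' T) ≤
              (Set.univ.pi fun _ : {i : Fin n // p i} => Set.Icc (0:ℝ) 1).indicator
                (fun _ => ENNReal.ofReal (6 * δ)) u := by
          intro u
          by_cases hu : u ∈ Set.univ.pi fun _ : {i : Fin n // p i} => Set.Icc (0:ℝ) 1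
          · rw [Set.indicator_of_mem hu]
            have : Prod.mk u ⁻¹' T ⊆
                (fun v : {i : Fin n // ¬ p i} → ℝ => v j₂) ⁻¹'
                  {t : ℝ | t ∈ Set.Icc (0:ℝ) 1 ∧ dnint (c u + (x j : ℝ) * t) ≤ δ} := by
              intro v hv
              exact ⟨hv.2.1, hv.2.2⟩
            refine (measure_mono this).trans ?_
            letI : Unique {i : Fin n // ¬ p i} :=
              ⟨⟨j₂⟩, fun a => Subtype.ext (by
                have h5 := a.2
                simp only [hp, not_not] at h5
                exact h5)⟩
            have hAm : MeasurableSet {t : ℝ | t ∈ Set.Icc (0:ℝ) 1 ∧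
                dnint (c u + (x j : ℝ) * t) ≤ δ} := by
              rw [Set.setOf_and]
              exact measurableSet_Icc.inter
                ((measurable_dnint.comp ((measurable_id.const_mul _).const_add _))
                  measurableSet_Iic)
            rw [vol_eval_unique j₂ _]
            exact oneD (x j) hj (c u) δ hδ
          · have : Prod.mk u ⁻¹' T = ∅ := by
              ext v
              simp only [Set.mem_preimage, Set.mem_empty_iff_false, iff_false]
              intro hv
              apply hu
              intro i _
              exact hv.1 i
            rw [this, Set.indicator_of_notMem hu, measure_empty]
        calc ∫⁻ u, volume (Prod.mk u ⁻¹' T) ≤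
              ∫⁻ u, (Set.univ.pi fun _ : {i : Fin n // p i} => Set.Icc (0:ℝ) 1).indicator
                (fun _ => ENNReal.ofReal (6 * δ)) u := lintegral_mono hslice
          _ = ENNReal.ofReal (6 * δ) *
              volume (Set.univ.pi fun _ : {i : Fin n // p i} => Set.Icc (0:ℝ) 1) := by
              rw [lintegral_indicator (MeasurableSet.univ_pi fun _ => measurableSet_Icc)]
              simp
          _ = ENNReal.ofReal (6 * δ) := by
              rw [volume_pi_pi]
              simp [Real.volume_Icc]

lemma natAbs_le_Hgt {n : ℕ} (x : Fin n → ℤ) (i : Fin n) : (x i).natAbs ≤ Hgt x :=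
  show (x i).natAbs ≤ Finset.univ.sup fun i => (x i).natAbs from
    Finset.le_sup (f := fun i => (x i).natAbs) (Finset.mem_univ i)

lemma Hgt_eq_zero {n : ℕ} (x : Fin n → ℤ) (h : Hgt x = 0) : x = 0 := by
  funext i
  have := natAbs_le_Hgt x i
  rw [h] at this
  simpa [Int.natAbs_eq_zero] using Nat.le_zero.1 this

lemma one_le_Hgt {n : ℕ} (x : Fin n → ℤ) (hx : x ≠ 0) : 1 ≤ Hgt x := by
  rcases Nat.eq_zero_or_pos (Hgt x) with h | h
  · exact absurd (Hgt_eq_zero x h) hx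
  · exact h

noncomputable def bigS (n h : ℕ) : Finset (Fin n → ℤ) :=
  Finset.univ.biUnion fun j : Fin n => Fintype.piFinset fun i =>
    if i = j then ({(h:ℤ), -(h:ℤ)} : Finset ℤ) else Finset.Icc (-(h:ℤ)) h

lemma mem_bigS {n h : ℕ} (hn : 1 ≤ n) (hh : 1 ≤ h) (x : Fin n → ℤ) (hx : Hgt x = h) :
    x ∈ bigS n h := by
  classical
  have hne : (Finset.univ : Finset (Fin n)).Nonempty :=
    Finset.univ_nonempty_iff.2 (Fin.pos_iff_nonempty.1 hn)
  obtain ⟨j, _, hj⟩ := Finset.exists_mem_eq_sup Finset.univ hne fun i => (x i).natAbs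
  rw [bigS, Finset.mem_biUnion]
  refine ⟨j, Finset.mem_univ j, ?_⟩
  rw [Fintype.mem_piFinset]
  intro i
  by_cases hij : i = j
  · subst hij
    have hna : (x i).natAbs = h := by rw [← hx]; exact hj.symm
    have h5 : x i = (h:ℤ) ∨ x i = -(h:ℤ) := by
      rcases Int.natAbs_eq (x i) with he | he
      · left; rw [he, hna]
      · right; rw [he, hna]
    simp only [if_true, eq_self_iff_true, Finset.mem_insert, Finset.mem_singleton, if_pos]
    exact h5
  · have h1 : (x i).natAbs ≤ h := by rw [← hx]; exact natAbs_le_Hgt x i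
    simp only [if_neg hij, Finset.mem_Icc]
    omega

lemma card_bigS {n h : ℕ} (hh : 1 ≤ h) :
    (bigS n h).card ≤ 2 * n * (2 * h + 1) ^ (n - 1) := by
  classical
  refine le_trans (Finset.card_biUnion_le) ?_
  have hcard : ∀ j : Fin n, (Fintype.piFinset fun i =>
      if i = j then ({(h:ℤ), -(h:ℤ)} : Finset ℤ) else Finset.Icc (-(h:ℤ)) h).card
      = 2 * (2 * h + 1) ^ (n - 1) := by
    intro j
    rw [Fintype.card_piFinset]
    have h2 : ∀ i : Fin n, (if i = j then ({(h:ℤ), -(h:ℤ)} : Finset ℤ)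
        else Finset.Icc (-(h:ℤ)) h).card = if i = j then 2 else 2 * h + 1 := by
      intro i
      by_cases hij : i = j
      · rw [if_pos hij, if_pos hij]
        rw [Finset.card_insert_of_notMem (by simp; omega), Finset.card_singleton]
      · rw [if_neg hij, if_neg hij, Int.card_Icc]
        omega
    rw [Finset.prod_congr rfl fun i _ => h2 i]
    rw [← Finset.mul_prod_erase Finset.univ _ (Finset.mem_univ j), if_pos rfl]
    have h3 : (∏ i ∈ Finset.univ.erase j, if i = j then 2 else 2 * h + 1)
        = (2 * h + 1) ^ (n - 1) := by
      rw [Finset.prod_congr rfl (fun i hi => if_neg (Finset.mem_erase.1 hi).1)]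
      rw [Finset.prod_const]
      congr 1
      rw [Finset.card_erase_of_mem (Finset.mem_univ j)]
      simp
    rw [h3]
  have h4 : (∑ j : Fin n, (Fintype.piFinset fun i =>
      if i = j then ({(h:ℤ), -(h:ℤ)} : Finset ℤ) else Finset.Icc (-(h:ℤ)) h).card)
      = 2 * n * (2 * h + 1) ^ (n - 1) := by
    rw [Finset.sum_congr rfl fun j _ => hcard j, Finset.sum_const, Finset.card_univ,
      Fintype.card_fin, smul_eq_mul]
    ring
  exact le_of_eq h4

lemma tsum_bound (n : ℕ) (hn : 1 ≤ n) (ν : ℝ) (hν : (n:ℝ) < ν) :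
    (∑' x : {x : Fin n → ℤ // x ≠ 0}, ENNReal.ofReal (6 * ((Hgt x.1 : ℝ) ^ (-ν)))) ≠ ∞ := by
  classical
  set g : {x : Fin n → ℤ // x ≠ 0} → ℝ≥0∞ :=
    fun x => ENNReal.ofReal (6 * ((Hgt x.1 : ℝ) ^ (-ν))) with hg
  set p : ℝ := ν - ((n - 1 : ℕ) : ℝ) with hp
  have hp1 : 1 < p := by
    rw [hp]
    have : ((n - 1 : ℕ) : ℝ) = (n : ℝ) - 1 := by
      have : (1:ℕ) ≤ n := hn
      push_cast [Nat.cast_sub this]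
      ring
    rw [this]
    linarith
  set C : ℝ := 6 * (2 * n * 3 ^ (n - 1)) with hC
  have hCpos : 0 ≤ C := by positivity
  -- finiteness of fibers
  have hfin : ∀ h : ℕ, 1 ≤ h → Finite {x : {x : Fin n → ℤ // x ≠ 0} // Hgt x.1 = h} := by
    intro h hh
    exact Finite.of_injective
      (fun x => (⟨x.1.1, mem_bigS hn hh _ x.2⟩ : {y // y ∈ bigS n h}))
      (fun a b hab => by
        apply Subtype.ext; apply Subtype.ext
        exact Subtype.mk_eq_mk.1 hab)
  have hre : ∑' x, g x = ∑' (h : ℕ), ∑' (x : {x : {x : Fin n → ℤ // x ≠ 0} // Hgt x.1 = h}), g x.1 := by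
    rw [← (Equiv.sigmaFiberEquiv fun x : {x : Fin n → ℤ // x ≠ 0} => Hgt x.1).tsum_eq g]
    rw [ENNReal.tsum_sigma']
    rfl
  have hbound : ∀ h : ℕ, (∑' (x : {x : {x : Fin n → ℤ // x ≠ 0} // Hgt x.1 = h}), g x.1) ≤
      ENNReal.ofReal (C * (((h:ℝ) ^ p)⁻¹)) := by
    intro h
    rcases Nat.eq_zero_or_pos h with rfl | hh
    · haveI : IsEmpty {x : {x : Fin n → ℤ // x ≠ 0} // Hgt x.1 = 0} := by
        constructor
        rintro ⟨⟨x, hx⟩, hx0⟩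
        exact hx (Hgt_eq_zero x hx0)
      rw [tsum_empty]
      exact zero_le
    · haveI := hfin h hh
      letI : Fintype {x : {x : Fin n → ℤ // x ≠ 0} // Hgt x.1 = h} := Fintype.ofFinite _
      have hhR : (0:ℝ) < h := by exact_mod_cast hh
      rw [tsum_fintype]
      have hconst : ∀ x : {x : {x : Fin n → ℤ // x ≠ 0} // Hgt x.1 = h},
          g x.1 = ENNReal.ofReal (6 * ((h:ℝ) ^ (-ν))) := by
        intro x
        rw [hg]
        simp only
        rw [x.2]
      rw [Finset.sum_congr rfl fun x _ => hconst x, Finset.sum_const, Finset.card_univ,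
        nsmul_eq_mul]
      have hcard : (Fintype.card {x : {x : Fin n → ℤ // x ≠ 0} // Hgt x.1 = h} : ℝ)
          ≤ 2 * n * 3 ^ (n - 1) * (h:ℝ) ^ (n - 1 : ℕ) := by
        have h1 : Fintype.card {x : {x : Fin n → ℤ // x ≠ 0} // Hgt x.1 = h} ≤ (bigS n h).card := by
          have := Fintype.card_le_of_injective
            (fun x : {x : {x : Fin n → ℤ // x ≠ 0} // Hgt x.1 = h} =>
              (⟨x.1.1, mem_bigS hn hh _ x.2⟩ : {y // y ∈ bigS n h}))
            (fun a b hab => by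
              apply Subtype.ext; apply Subtype.ext
              exact Subtype.mk_eq_mk.1 hab)
          rwa [Fintype.card_coe] at this
        have h2 : (bigS n h).card ≤ 2 * n * (2 * h + 1) ^ (n - 1) := card_bigS hh
        have h3 : (2 * h + 1) ^ (n - 1) ≤ (3 * h) ^ (n - 1) :=
          Nat.pow_le_pow_left (by omega) _
        have h4 : Fintype.card {x : {x : Fin n → ℤ // x ≠ 0} // Hgt x.1 = h}
            ≤ 2 * n * (3 * h) ^ (n - 1) := le_trans h1 (le_trans h2 (by
              exact Nat.mul_le_mul_left _ h3))
        calc (Fintype.card {x : {x : Fin n → ℤ // x ≠ 0} // Hgt x.1 = h} : ℝ)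
            ≤ ((2 * n * (3 * h) ^ (n - 1) : ℕ) : ℝ) := by exact_mod_cast h4
          _ = 2 * n * 3 ^ (n - 1) * (h:ℝ) ^ (n - 1 : ℕ) := by push_cast; ring
      calc (Fintype.card {x : {x : Fin n → ℤ // x ≠ 0} // Hgt x.1 = h} : ℝ≥0∞)
            * ENNReal.ofReal (6 * ((h:ℝ) ^ (-ν)))
          = ENNReal.ofReal ((Fintype.card {x : {x : Fin n → ℤ // x ≠ 0} // Hgt x.1 = h} : ℝ)
              * (6 * ((h:ℝ) ^ (-ν)))) := by
            rw [ENNReal.ofReal_mul (by positivity :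
              (0:ℝ) ≤ (Fintype.card {x : {x : Fin n → ℤ // x ≠ 0} // Hgt x.1 = h} : ℝ))]
            rw [ENNReal.ofReal_natCast]
        _ ≤ ENNReal.ofReal ((2 * n * 3 ^ (n - 1) * (h:ℝ) ^ (n - 1 : ℕ)) * (6 * ((h:ℝ) ^ (-ν)))) := by
            apply ENNReal.ofReal_le_ofReal
            apply mul_le_mul_of_nonneg_right hcard (by positivity)
        _ = ENNReal.ofReal (C * (((h:ℝ) ^ p)⁻¹)) := by
            congr 1
            rw [hC, hp]
            have he1 : (h:ℝ) ^ (n - 1 : ℕ) = (h:ℝ) ^ (((n-1:ℕ):ℝ)) := by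
              rw [Real.rpow_natCast]
            have he2 : (h:ℝ) ^ (((n-1:ℕ):ℝ)) * (h:ℝ) ^ (-ν) = (h:ℝ) ^ ((((n-1:ℕ):ℝ)) - ν) := by
              rw [← Real.rpow_add hhR]
              ring_nf
            have he3 : (h:ℝ) ^ ((((n-1:ℕ):ℝ)) - ν) = ((h:ℝ) ^ (ν - ((n-1:ℕ):ℝ)))⁻¹ := by
              rw [← Real.rpow_neg hhR.le]
              ring_nf
            rw [he1]
            rw [show (2 * (n:ℝ) * 3 ^ (n - 1) * (h:ℝ) ^ (((n-1:ℕ):ℝ))) * (6 * ((h:ℝ) ^ (-ν)))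
              = 6 * (2 * n * 3 ^ (n - 1)) * ((h:ℝ) ^ (((n-1:ℕ):ℝ)) * (h:ℝ) ^ (-ν)) by ring]
            rw [he2, he3]
  rw [hre]
  have hsummable : Summable (fun h : ℕ => C * (((h:ℝ) ^ p)⁻¹)) :=
    (Real.summable_nat_rpow_inv.2 hp1).mul_left C
  have hnonneg : ∀ h : ℕ, 0 ≤ C * (((h:ℝ) ^ p)⁻¹) := by
    intro h
    positivity
  exact ne_top_of_le_ne_top ENNReal.ofReal_ne_top
    (le_trans (ENNReal.tsum_le_tsum hbound)
      (le_of_eq (ENNReal.ofReal_tsum_of_nonneg hnonneg hsummable).symm))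

def Box (n : ℕ) : Set (Fin n → ℝ) := Set.univ.pi fun _ => Set.Icc (0:ℝ) 1

lemma Box_measurable (n : ℕ) : MeasurableSet (Box n) :=
  MeasurableSet.univ_pi fun _ => measurableSet_Icc

lemma ae_sols_finite (n : ℕ) (hn : 1 ≤ n) (ν : ℝ) (hν : (n:ℝ) < ν) :
    ∀ᵐ α ∂(volume : Measure (Fin n → ℝ)),
      {x : Fin n → ℤ | x ≠ 0 ∧ dnint (∑ i, (x i : ℝ) * α i) ≤ (Hgt x : ℝ) ^ (-ν)}.Finite := by
  classical
  set Bad : Set (Fin n → ℝ) := {α | ¬ {x : Fin n → ℤ | x ≠ 0 ∧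
    dnint (∑ i, (x i : ℝ) * α i) ≤ (Hgt x : ℝ) ^ (-ν)}.Finite} with hBad
  -- local estimate
  have hlocal : volume (Bad ∩ Box n) = 0 := by
    set μb := (volume : Measure (Fin n → ℝ)).restrict (Box n) with hμb
    set E : {x : Fin n → ℤ // x ≠ 0} → Set (Fin n → ℝ) :=
      fun x => {α | dnint (∑ i, (x.1 i : ℝ) * α i) ≤ (Hgt x.1 : ℝ) ^ (-ν)} with hE
    have hEb : ∀ x : {x : Fin n → ℤ // x ≠ 0}, μb (E x) ≤
        ENNReal.ofReal (6 * ((Hgt x.1 : ℝ) ^ (-ν))) := by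
      intro x
      obtain ⟨j, hj⟩ := Function.ne_iff.1 x.2
      have hj' : x.1 j ≠ 0 := by simpa using hj
      have hδ : (0:ℝ) ≤ (Hgt x.1 : ℝ) ^ (-ν) := Real.rpow_nonneg (Nat.cast_nonneg _) _
      rw [hμb, Measure.restrict_apply' (Box_measurable n)]
      refine le_trans (measure_mono ?_) (slab x.1 j hj' _ hδ)
      rintro α ⟨hα1, hα2⟩
      exact ⟨fun i => hα2 i (Set.mem_univ i), hα1⟩
    have htsum : (∑' x : {x : Fin n → ℤ // x ≠ 0}, μb (E x)) ≠ ∞ :=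
      ne_top_of_le_ne_top (tsum_bound n hn ν hν) (ENNReal.tsum_le_tsum hEb)
    have hBC := MeasureTheory.ae_finite_setOf_mem (μ := μb) htsum
    have hae : ∀ᵐ α ∂μb, α ∉ Bad := by
      filter_upwards [hBC] with α hα
      rw [hBad]
      simp only [Set.mem_setOf_eq, not_not]
      have himg : {x : Fin n → ℤ | x ≠ 0 ∧
          dnint (∑ i, (x i : ℝ) * α i) ≤ (Hgt x : ℝ) ^ (-ν)} ⊆
          Subtype.val '' {x : {x : Fin n → ℤ // x ≠ 0} | α ∈ E x} := by
        rintro x ⟨hx0, hxd⟩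
        exact ⟨⟨x, hx0⟩, hxd, rfl⟩
      exact Set.Finite.subset (Set.Finite.image _ hα) himg
    have h0 : μb Bad = 0 := by
      have h := hae
      rw [MeasureTheory.ae_iff] at h
      simp only [not_not] at h
      simpa using h
    rw [hμb, Measure.restrict_apply' (Box_measurable n)] at h0
    exact h0
  -- invariance under integer translations
  have hinv : ∀ (k : Fin n → ℤ) (α : Fin n → ℝ),
      (fun i => α i + (k i : ℝ)) ∈ Bad ↔ α ∈ Bad := by
    intro k α
    have hset : {x : Fin n → ℤ | x ≠ 0 ∧
        dnint (∑ i, (x i : ℝ) * (α i + (k i : ℝ))) ≤ (Hgt x : ℝ) ^ (-ν)} =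
        {x : Fin n → ℤ | x ≠ 0 ∧
        dnint (∑ i, (x i : ℝ) * α i) ≤ (Hgt x : ℝ) ^ (-ν)} := by
      ext x
      have hd : dnint (∑ i, (x i : ℝ) * (α i + (k i : ℝ))) =
          dnint (∑ i, (x i : ℝ) * α i) := by
        have hsum : ∑ i, (x i : ℝ) * (α i + (k i : ℝ)) =
            (∑ i, (x i : ℝ) * α i) + ((∑ i, x i * k i : ℤ) : ℝ) := by
          push_cast
          rw [← Finset.sum_add_distrib]
          congr 1
          funext i
          ring
        rw [hsum, dnint_add_int]
      simp [hd]
    simp only [hBad, Set.mem_setOf_eq, hset]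
  -- covering
  have hcover : Bad ⊆ ⋃ (k : Fin n → ℤ),
      (fun α : Fin n → ℝ => α + (fun i => ((k i : ℝ)))) ⁻¹' (Bad ∩ Box n) := by
    intro α hα
    refine Set.mem_iUnion.2 ⟨fun i => -⌊α i⌋, ?_⟩
    constructor
    · exact (hinv (fun i => -⌊α i⌋) α).2 hα
    · intro i _
      have h1 := Int.fract_nonneg (α i)
      have h2 := (Int.fract_lt_one (α i)).le
      rw [Int.fract] at h1 h2
      constructor
      · show (0:ℝ) ≤ α i + ((-⌊α i⌋ : ℤ) : ℝ)
        push_cast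
        linarith
      · show α i + ((-⌊α i⌋ : ℤ) : ℝ) ≤ 1
        push_cast
        linarith
  have hnull : volume Bad = 0 := by
    refine measure_mono_null hcover (measure_iUnion_null fun k => ?_)
    rw [measure_preimage_add_right]
    exact hlocal
  rw [MeasureTheory.ae_iff]
  convert hnull using 2

lemma ae_not_int (n : ℕ) :
    ∀ᵐ α ∂(volume : Measure (Fin n → ℝ)), ∀ x : Fin n → ℤ, x ≠ 0 →
      ∀ k : ℤ, ∑ i, (x i : ℝ) * α i ≠ (k : ℝ) := by
  classical
  have hnull : ∀ (x : Fin n → ℤ), x ≠ 0 → ∀ (k : ℤ),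
      volume {α : Fin n → ℝ | ∑ i, (x i : ℝ) * α i = (k : ℝ)} = 0 := by
    intro x hx k
    obtain ⟨j, hj⟩ := Function.ne_iff.1 hx
    have hj' : x j ≠ 0 := by simpa using hj
    have hjR : ((x j : ℝ)) ≠ 0 := Int.cast_ne_zero.2 hj'
    set φ : (Fin n → ℝ) →ₗ[ℝ] ℝ := ∑ i, (x i : ℝ) • LinearMap.proj i with hφ
    have hφap : ∀ α, φ α = ∑ i, (x i : ℝ) * α i := by
      intro α
      rw [hφ]
      simp [LinearMap.sum_apply, LinearMap.smul_apply, LinearMap.proj_apply, smul_eq_mul]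
    set α₀ : Fin n → ℝ := fun i => if i = j then (k : ℝ) / (x j : ℝ) else 0 with hα₀
    have hφα₀ : φ α₀ = (k : ℝ) := by
      rw [hφap, hα₀]
      rw [Finset.sum_eq_single j]
      · simp [hjR]
        field_simp
      · intro i _ hij
        simp [hij]
      · intro hj2
        exact absurd (Finset.mem_univ j) hj2
    set A : AffineSubspace ℝ (Fin n → ℝ) := AffineSubspace.mk' α₀ (LinearMap.ker φ) with hA
    have hcoe : {α : Fin n → ℝ | ∑ i, (x i : ℝ) * α i = (k : ℝ)} = (A : Set (Fin n → ℝ)) := by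
      ext α
      rw [hA]
      constructor
      · intro hα
        rw [AffineSubspace.mem_coe, AffineSubspace.mem_mk']
        rw [LinearMap.mem_ker]
        have : φ (α - α₀) = 0 := by
          rw [map_sub, hφα₀, hφap]
          rw [Set.mem_setOf_eq] at hα
          rw [hα]
          ring
        exact this
      · intro hα
        rw [AffineSubspace.mem_coe, AffineSubspace.mem_mk', LinearMap.mem_ker] at hα
        have h1 : φ (α - α₀) = 0 := hα
        rw [map_sub, hφα₀] at h1
        rw [Set.mem_setOf_eq, ← hφap]
        linarith
    have hAne : A ≠ ⊤ := by
      intro htop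
      have : (α₀ + fun i => if i = j then (1:ℝ) else 0) ∈ A := by
        rw [htop]; trivial
      rw [hA, AffineSubspace.mem_mk', LinearMap.mem_ker] at this
      have h1 : φ ((α₀ + fun i => if i = j then (1:ℝ) else 0) - α₀) = 0 := this
      have h2 : ((α₀ + fun i => if i = j then (1:ℝ) else 0) - α₀) =
          (fun i => if i = j then (1:ℝ) else 0) := by
        funext i; simp
      rw [h2, hφap] at h1
      rw [Finset.sum_eq_single j] at h1
      · simp at h1
        exact hj' h1
      · intro i _ hij
        simp [hij]
      · intro hj2
        exact absurd (Finset.mem_univ j) hj2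
    rw [hcoe]
    exact MeasureTheory.Measure.addHaar_affineSubspace volume A hAne
  have hZ : volume (⋃ (x : {x : Fin n → ℤ // x ≠ 0}) (k : ℤ),
      {α : Fin n → ℝ | ∑ i, (x.1 i : ℝ) * α i = (k : ℝ)}) = 0 :=
    measure_iUnion_null fun x => measure_iUnion_null fun k => hnull x.1 x.2 k
  rw [MeasureTheory.ae_iff]
  refine measure_mono_null ?_ hZ
  intro α hα
  simp only [Set.mem_setOf_eq, not_forall] at hα
  obtain ⟨x, hx0, k, hk⟩ := hα
  refine Set.mem_iUnion.2 ⟨⟨x, hx0⟩, Set.mem_iUnion.2 ⟨k, ?_⟩⟩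
  simpa using hk

lemma card_filter_lt (n ℓ : ℕ) (h : ℓ ≤ n) :
    (Finset.univ.filter fun i : Fin n => (i : ℕ) < ℓ).card = ℓ := by
  classical
  rw [← Fintype.card_subtype]
  have e : {i : Fin n // (i : ℕ) < ℓ} ≃ Fin ℓ :=
    { toFun := fun x => ⟨x.1, x.2⟩
      invFun := fun j => ⟨⟨j.1, lt_of_lt_of_le j.2 h⟩, j.2⟩
      left_inv := fun x => rfl
      right_inv := fun j => rfl }
  rw [Fintype.card_congr e, Fintype.card_fin]

lemma Hgt_le {n : ℕ} (x : Fin n → ℤ) (B : ℕ) (h : ∀ i, (x i).natAbs ≤ B) : Hgt x ≤ B :=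
  Finset.sup_le fun i _ => h i

lemma sols_infinite (n ℓ : ℕ) (hℓ : 1 ≤ ℓ) (hn : ℓ ≤ n) (α : Fin n → ℝ)
    (m : ℝ) (hm0 : 0 ≤ m) (hmn : m < n)
    (hpos : ∀ x : Fin n → ℤ, x ≠ 0 → ∀ k : ℤ, ∑ i, (x i : ℝ) * α i ≠ (k : ℝ))
    (hfin : ∀ q : ℕ, {x : Fin n → ℤ | x ≠ 0 ∧
      dnint (∑ i, (x i : ℝ) * α i) ≤ (Hgt x : ℝ) ^ (-((n:ℝ) + ℓ / ((q:ℝ)+1)))}.Finite) :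
    {x : Fin n → ℤ | cone ℓ x ∧ 0 < dnint (∑ i, (x i : ℝ) * α i) ∧
      dnint (∑ i, (x i : ℝ) * α i) ≤ (Hgt x : ℝ) ^ (-m)}.Infinite := by
  classical
  have hn1 : 1 ≤ n := le_trans hℓ hn
  have hnm : (0:ℝ) < (n:ℝ) - m := by
    have : (m:ℝ) < (n:ℝ) := hmn
    linarith
  -- choose q₀
  obtain ⟨q₀, hq₀⟩ := exists_nat_gt ((m - ℓ) / ((n:ℝ) - m))
  set q' : ℕ := q₀ + 1 with hq'
  have hq'R : ((q':ℕ):ℝ) = (q₀:ℝ) + 1 := by simp [hq']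
  have hq'pos : (0:ℝ) < (q':ℕ) := by rw [hq'R]; positivity
  have hkey : (m - ℓ) < ((q':ℕ):ℝ) * ((n:ℝ) - m) := by
    have h1 : ((m - ℓ) / ((n:ℝ) - m)) < (q':ℕ) := by
      rw [hq'R]
      have : (q₀:ℝ) ≤ (q₀:ℝ) + 1 := by linarith
      linarith
    calc (m - ℓ) = ((m - ℓ) / ((n:ℝ) - m)) * ((n:ℝ) - m) := by field_simp
      _ < ((q':ℕ):ℝ) * ((n:ℝ) - m) := by
          apply mul_lt_mul_of_pos_right h1 hnm
  set ν : ℝ := (n:ℝ) + ℓ / ((q₀:ℝ)+1) with hν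
  set E : ℕ := ℓ + q' * n with hE
  have hE1 : 1 ≤ E := by rw [hE]; omega
  -- the key production step
  have key : ∀ Q : ℕ, 1 ≤ Q → ∃ x : Fin n → ℤ,
      (x ∈ {x : Fin n → ℤ | cone ℓ x ∧ 0 < dnint (∑ i, (x i : ℝ) * α i) ∧
        dnint (∑ i, (x i : ℝ) * α i) ≤ (Hgt x : ℝ) ^ (-m)} ∪
       {x : Fin n → ℤ | x ≠ 0 ∧
        dnint (∑ i, (x i : ℝ) * α i) ≤ (Hgt x : ℝ) ^ (-ν)}) ∧
      dnint (∑ i, (x i : ℝ) * α i) ≤ (((Q ^ E : ℕ) : ℝ))⁻¹ := by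
    intro Q hQ
    set b : Fin n → ℕ := fun i => if (i:ℕ) < ℓ then Q ^ (q' + 1) else Q ^ q' with hb
    have hb1 : ∀ i, 1 ≤ b i := by
      intro i
      rw [hb]
      by_cases h : (i:ℕ) < ℓ <;> simp [h] <;> exact Nat.one_le_pow _ _ hQ
    have hprod : ∏ i, b i = Q ^ E := by
      rw [hb, Finset.prod_ite (fun _ => Q ^ (q' + 1)) (fun _ => Q ^ q')]
      rw [Finset.prod_const, Finset.prod_const]
      rw [card_filter_lt n ℓ hn]
      have hcard2 : (Finset.univ.filter fun i : Fin n => ¬ ((i:ℕ) < ℓ)).card = n - ℓ := by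
        have := Finset.card_filter_add_card_filter_not
          (s := (Finset.univ : Finset (Fin n))) (p := fun i : Fin n => (i:ℕ) < ℓ)
        rw [card_filter_lt n ℓ hn, Finset.card_univ, Fintype.card_fin] at this
        omega
      rw [hcard2]
      rw [← pow_mul, ← pow_mul, ← pow_add]
      congr 1
      obtain ⟨d, rfl⟩ : ∃ d, n = ℓ + d := ⟨n - ℓ, (Nat.add_sub_cancel' hn).symm⟩
      rw [hE]
      simp only [Nat.add_sub_cancel_left]
      ring
    obtain ⟨x, hx0, hxb, hxd⟩ := dirichlet hn1 α b hb1
    rw [hprod] at hxd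
    have hH1 : 1 ≤ Hgt x := one_le_Hgt x hx0
    have hH1R : (1:ℝ) ≤ (Hgt x : ℝ) := by exact_mod_cast hH1
    have hQR : (1:ℝ) ≤ (Q:ℝ) := by exact_mod_cast hQ
    have hdpos : 0 < dnint (∑ i, (x i : ℝ) * α i) := by
      rcases (dnint_nonneg (∑ i, (x i : ℝ) * α i)).lt_or_eq with h | h
      · exact h
      · exfalso
        have : ∑ i, (x i : ℝ) * α i = (round (∑ i, (x i : ℝ) * α i) : ℝ) := by
          have h2 := h.symm
          rw [dnint] at h2
          have := abs_eq_zero.1 h2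
          linarith
        exact hpos x hx0 _ this
    refine ⟨x, ?_, hxd⟩
    by_cases hc : cone ℓ x
    · left
      refine ⟨hc, hdpos, ?_⟩
      -- H ≤ Q^(q'+1)
      have hHle : Hgt x ≤ Q ^ (q' + 1) := by
        apply Hgt_le
        intro i
        refine le_trans (hxb i) ?_
        rw [hb]
        beta_reduce
        by_cases h : (i:ℕ) < ℓ
        · rw [if_pos h]
        · rw [if_neg h]
          exact Nat.pow_le_pow_right hQ (by omega)
      have hHleR : ((Hgt x : ℝ)) ≤ ((Q:ℝ)) ^ (q' + 1 : ℕ) := by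
        exact_mod_cast hHle
      have hmain : ((Hgt x : ℝ)) ^ m ≤ ((Q:ℝ)) ^ (E:ℕ) := by
        calc ((Hgt x : ℝ)) ^ m ≤ (((Q:ℝ)) ^ (q' + 1 : ℕ)) ^ m := by
              apply Real.rpow_le_rpow (by positivity) hHleR hm0
          _ = ((Q:ℝ)) ^ ((((q' + 1 : ℕ)):ℝ) * m) := by
              rw [← Real.rpow_natCast ((Q:ℝ)) (q' + 1), ← Real.rpow_mul (by positivity)]
          _ ≤ ((Q:ℝ)) ^ (((E:ℕ)):ℝ) := by
              apply Real.rpow_le_rpow_of_exponent_le hQR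
              rw [hE]
              push_cast
              nlinarith [hkey]
          _ = ((Q:ℝ)) ^ (E:ℕ) := by rw [Real.rpow_natCast]
      rw [Real.rpow_neg (by positivity)]
      have hcast : (((Q ^ E : ℕ) : ℝ)) = ((Q:ℝ)) ^ (E:ℕ) := by push_cast; ring
      rw [hcast] at hxd
      exact le_trans hxd (inv_anti₀ (Real.rpow_pos_of_pos (by linarith) m) hmain)
    · right
      refine ⟨hx0, ?_⟩
      -- H ≤ Q^q'
      have hHle : Hgt x ≤ Q ^ q' := by
        apply Hgt_le
        intro i
        by_cases h : (i:ℕ) < ℓ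
        · -- use ¬cone
          have h1 : (x i).natAbs ≤
              ((Finset.univ.filter fun i : Fin n => (i : ℕ) < ℓ).sup fun i => (x i).natAbs) :=
            Finset.le_sup (f := fun i => (x i).natAbs) (Finset.mem_filter.2 ⟨Finset.mem_univ i, h⟩)
          have h2 : ((Finset.univ.filter fun i : Fin n => (i : ℕ) < ℓ).sup fun i => (x i).natAbs)
              ≤ ((Finset.univ.filter fun i : Fin n => ℓ ≤ (i : ℕ)).sup fun i => (x i).natAbs) :=
            not_lt.1 hc
          have h3 : ((Finset.univ.filter fun i : Fin n => ℓ ≤ (i : ℕ)).sup fun i => (x i).natAbs)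
              ≤ Q ^ q' := by
            apply Finset.sup_le
            intro j hj
            rw [Finset.mem_filter] at hj
            refine le_trans (hxb j) ?_
            rw [hb]
            beta_reduce
            exact le_of_eq (if_neg (not_lt.2 hj.2))
          omega
        · refine le_trans (hxb i) ?_
          rw [hb]
          beta_reduce
          exact le_of_eq (if_neg h)
      have hHleR : ((Hgt x : ℝ)) ≤ ((Q:ℝ)) ^ (q' : ℕ) := by exact_mod_cast hHle
      have hνE : (((q':ℕ)):ℝ) * ν = ((E:ℕ):ℝ) := by
        rw [hν, hE, hq'R]
        push_cast
        field_simp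
        rw [hq'R]
        ring
      have hmain : ((Hgt x : ℝ)) ^ ν ≤ ((Q:ℝ)) ^ (E:ℕ) := by
        have hν0 : 0 ≤ ν := by
          rw [hν]
          positivity
        calc ((Hgt x : ℝ)) ^ ν ≤ (((Q:ℝ)) ^ (q' : ℕ)) ^ ν := by
              apply Real.rpow_le_rpow (by positivity) hHleR hν0
          _ = ((Q:ℝ)) ^ ((((q':ℕ)):ℝ) * ν) := by
              rw [← Real.rpow_natCast ((Q:ℝ)) q', ← Real.rpow_mul (by positivity)]
          _ = ((Q:ℝ)) ^ (((E:ℕ)):ℝ) := by rw [hνE]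
          _ = ((Q:ℝ)) ^ (E:ℕ) := by rw [Real.rpow_natCast]
      rw [Real.rpow_neg (by positivity)]
      have hcast : (((Q ^ E : ℕ) : ℝ)) = ((Q:ℝ)) ^ (E:ℕ) := by push_cast; ring
      rw [hcast] at hxd
      exact le_trans hxd (inv_anti₀ (Real.rpow_pos_of_pos (by linarith) ν) hmain)
  -- now conclude
  intro hSfin
  set Sols := {x : Fin n → ℤ | cone ℓ x ∧ 0 < dnint (∑ i, (x i : ℝ) * α i) ∧
    dnint (∑ i, (x i : ℝ) * α i) ≤ (Hgt x : ℝ) ^ (-m)} with hSols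
  set F := {x : Fin n → ℤ | x ≠ 0 ∧
    dnint (∑ i, (x i : ℝ) * α i) ≤ (Hgt x : ℝ) ^ (-ν)} with hF
  have hGfin : (Sols ∪ F).Finite := Set.Finite.union hSfin (hfin q₀)
  have hGpos : ∀ y ∈ Sols ∪ F, 0 < dnint (∑ i, (y i : ℝ) * α i) := by
    rintro y (hy | hy)
    · exact hy.2.1
    · rcases (dnint_nonneg (∑ i, (y i : ℝ) * α i)).lt_or_eq with h | h
      · exact h
      · exfalso
        have : ∑ i, (y i : ℝ) * α i = (round (∑ i, (y i : ℝ) * α i) : ℝ) := by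
          have h2 := h.symm
          rw [dnint] at h2
          have := abs_eq_zero.1 h2
          linarith
        exact hpos y hy.1 _ this
  rcases (Sols ∪ F).eq_empty_or_nonempty with hGe | hGne
  · obtain ⟨x, hxG, _⟩ := key 1 le_rfl
    rw [hGe] at hxG
    exact hxG
  · set Gf := hGfin.toFinset with hGf
    have hGfne : Gf.Nonempty := by
      rw [hGf, Set.Finite.toFinset_nonempty]
      exact hGne
    set ε := Gf.inf' hGfne (fun y => dnint (∑ i, (y i : ℝ) * α i)) with hε
    have hε0 : 0 < ε := by
      rw [hε, Finset.lt_inf'_iff]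
      intro y hy
      exact hGpos y (by rwa [hGf, Set.Finite.mem_toFinset] at hy)
    have hεle : ∀ y ∈ Sols ∪ F, ε ≤ dnint (∑ i, (y i : ℝ) * α i) := by
      intro y hy
      rw [hε]
      exact Finset.inf'_le _ (by rwa [hGf, Set.Finite.mem_toFinset])
    obtain ⟨Q, hQgt⟩ := exists_nat_gt (1 / ε)
    have hQ0 : (0:ℝ) < (Q:ℝ) := lt_trans (by positivity) hQgt
    have hQ1 : 1 ≤ Q := by exact_mod_cast Nat.one_le_iff_ne_zero.2 (by
      intro h; rw [h] at hQ0; simp at hQ0)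
    obtain ⟨x, hxG, hxd⟩ := key Q hQ1
    have hle1 : (((Q ^ E : ℕ) : ℝ))⁻¹ ≤ ((Q:ℝ))⁻¹ := by
      apply inv_anti₀ hQ0
      have : Q ≤ Q ^ E := Nat.le_self_pow (by omega) Q
      exact_mod_cast this
    have hlt : ((Q:ℝ))⁻¹ < ε := by
      rw [inv_eq_one_div, div_lt_iff₀ hQ0]
      rw [div_lt_iff₀ hε0] at hQgt
      linarith [mul_comm (Q:ℝ) ε]
    have := hεle x hxG
    linarith [hxd.trans hle1]

lemma cone_ne_zero {n ℓ : ℕ} {x : Fin n → ℤ} (h : cone ℓ x) : x ≠ 0 := by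
  rintro rfl
  rw [cone] at h
  have h1 : ((Finset.univ.filter fun i : Fin n => (i:ℕ) < ℓ).sup
      fun i => ((0 : Fin n → ℤ) i).natAbs) = 0 := by
    apply Nat.le_zero.1
    apply Finset.sup_le
    intro i _
    simp
  rw [h1] at h
  exact Nat.not_lt_zero _ h

theorem mu_ae_eq_n (n ℓ : ℕ) (hℓ : 1 ≤ ℓ) (hn : ℓ ≤ n) :
    ∀ᵐ α ∂(volume : Measure (Fin n → ℝ)), mu n ℓ α = n := by
  have hn1 : 1 ≤ n := le_trans hℓ hn
  have hae2 : ∀ᵐ α ∂(volume : Measure (Fin n → ℝ)), ∀ q : ℕ,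
      {x : Fin n → ℤ | x ≠ 0 ∧ dnint (∑ i, (x i : ℝ) * α i) ≤
        (Hgt x : ℝ) ^ (-((n:ℝ) + ℓ / ((q:ℝ)+1)))}.Finite := by
    rw [MeasureTheory.ae_all_iff]
    intro q
    apply ae_sols_finite n hn1
    have h1 : (0:ℝ) < (ℓ:ℝ) / ((q:ℝ)+1) := by
      apply div_pos
      · exact_mod_cast hℓ
      · positivity
    linarith
  filter_upwards [ae_not_int n, hae2] with α hpos hfin
  set S := {m : ℝ | 0 ≤ m ∧ {x : Fin n → ℤ | cone ℓ x ∧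
    0 < dnint (∑ i, (x i : ℝ) * α i) ∧
    dnint (∑ i, (x i : ℝ) * α i) ≤ (Hgt x : ℝ) ^ (-m)}.Infinite} with hS
  have hmuS : mu n ℓ α = sSup S := rfl
  have hU' : ∀ m ∈ S, m ≤ (n:ℝ) := by
    intro m hm
    by_contra hcon
    push_neg at hcon
    obtain ⟨q, hq⟩ := exists_nat_gt ((ℓ:ℝ) / (m - (n:ℝ)))
    have hmn0 : (0:ℝ) < m - n := by linarith
    have hq1 : (ℓ:ℝ) / (m - (n:ℝ)) < (q:ℝ) + 1 := by linarith
    have hνlt : (n:ℝ) + (ℓ:ℝ) / ((q:ℝ)+1) < m := by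
      have h2 : (ℓ:ℝ) < (m - n) * ((q:ℝ)+1) := by
        rw [div_lt_iff₀ hmn0] at hq1
        linarith
      have h3 : (ℓ:ℝ) / ((q:ℝ)+1) < m - n := by
        rw [div_lt_iff₀ (by positivity : (0:ℝ) < (q:ℝ)+1)]
        linarith
      linarith
    have hsub : {x : Fin n → ℤ | cone ℓ x ∧
        0 < dnint (∑ i, (x i : ℝ) * α i) ∧
        dnint (∑ i, (x i : ℝ) * α i) ≤ (Hgt x : ℝ) ^ (-m)} ⊆
        {x : Fin n → ℤ | x ≠ 0 ∧ dnint (∑ i, (x i : ℝ) * α i) ≤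
          (Hgt x : ℝ) ^ (-((n:ℝ) + ℓ / ((q:ℝ)+1)))} := by
      rintro x ⟨hc, _, hd⟩
      have hx0 : x ≠ 0 := cone_ne_zero hc
      refine ⟨hx0, le_trans hd ?_⟩
      apply Real.rpow_le_rpow_of_exponent_le
      · exact_mod_cast one_le_Hgt x hx0
      · linarith
    exact hm.2 ((hfin q).subset hsub)
  have hmem : ∀ m : ℝ, 0 ≤ m → m < (n:ℝ) → m ∈ S := by
    intro m h0 h1
    exact ⟨h0, sols_infinite n ℓ hℓ hn α m h0 h1 hpos hfin⟩
  have hbdd : BddAbove S := ⟨(n:ℝ), fun m hm => hU' m hm⟩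
  have hnpos : (0:ℝ) < (n:ℝ) := by
    have : (1:ℝ) ≤ (n:ℝ) := by exact_mod_cast hn1
    linarith
  have h0S : (0:ℝ) ∈ S := hmem 0 le_rfl hnpos
  have hmu0 : (0:ℝ) ≤ sSup S := le_csSup hbdd h0S
  have hle : sSup S ≤ (n:ℝ) := Real.sSup_le hU' hnpos.le
  have hge : (n:ℝ) ≤ sSup S := by
    by_contra hlt
    push_neg at hlt
    have hm2 : (sSup S + (n:ℝ))/2 ∈ S := hmem _ (by linarith) (by linarith)
    have := le_csSup hbdd hm2
    linarith
  rw [hmuS]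
  linarith
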